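/- For m ≥ 2, the number of valid placements in an m²×m² Sudoku grid with m×m blocks, namely (m!)^(2m), is strictly greater than the number of m×m almost-balanced 0–1 matrices, A(m,m) = ∑_{i=0}^{m-1} (C(m,i)+C(m,i+1))^m − ∑_{i=1}^{m-1} C(m,i)^m. -/

import Mathlib

/-- Number of nonzero (true) entries in row `i` of a 0-1 matrix. -/
def rowCount {a b : ℕ} (M : Fin a → Fin b → Bool) (i : Fin a) : ℕ :=
  (Finset.univ.filter (fun j => M i j = true)).card

/-- A 0-1 matrix is almost balanced if every two rows have numbers of
nonzeros differing by at most one. -/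
def AlmostBalanced {a b : ℕ} (M : Fin a → Fin b → Bool) : Prop :=
  ∀ i i' : Fin a, rowCount M i ≤ rowCount M i' + 1

lemma pair_le_two_pow (m i : ℕ) : m.choose i + m.choose (i+1) ≤ 2 ^ m := by
  rcases le_or_gt i m with h | h
  · calc m.choose i + m.choose (i+1) = ∑ j ∈ ({i, i+1} : Finset ℕ), m.choose j := by
          rw [Finset.sum_pair (by omega)]
    _ ≤ ∑ j ∈ Finset.range (m+2), m.choose j := by
          apply Finset.sum_le_sum_of_subset
          intro x hx
          simp only [Finset.mem_insert, Finset.mem_singleton] at hx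
          simp only [Finset.mem_range]
          omega
    _ = 2 ^ m := by
          rw [Finset.sum_range_succ, Nat.choose_eq_zero_of_lt (by omega),
            Nat.sum_range_choose, add_zero]
  · rw [Nat.choose_eq_zero_of_lt h, Nat.choose_eq_zero_of_lt (by omega)]
    positivity

lemma two_pow_le_fact (m : ℕ) : 2 ^ (m - 1) ≤ m.factorial := by
  induction m with
  | zero => simp
  | succ n ih =>
    rcases Nat.eq_zero_or_pos n with h | h
    · subst h; simp
    · have : 2 ^ (n + 1 - 1) = 2 * 2 ^ (n - 1) := by
        rw [← pow_succ']
        congr 1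
        omega
      rw [this, Nat.factorial_succ]
      exact Nat.mul_le_mul (by omega) ih

lemma nat_bound (m : ℕ) (hm : 3 ≤ m) :
    ∑ i ∈ Finset.range m, (m.choose i + m.choose (i+1)) ^ m < m.factorial ^ (2 * m) := by
  have h1 : ∑ i ∈ Finset.range m, (m.choose i + m.choose (i+1)) ^ m ≤ m * (2 ^ m) ^ m := by
    calc ∑ i ∈ Finset.range m, (m.choose i + m.choose (i+1)) ^ m
        ≤ ∑ _i ∈ Finset.range m, (2 ^ m) ^ m :=
          Finset.sum_le_sum fun i _ => Nat.pow_le_pow_left (pair_le_two_pow m i) m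
      _ = m * (2 ^ m) ^ m := by rw [Finset.sum_const, Finset.card_range, smul_eq_mul]
  have h2 : m * (2 ^ m) ^ m < (2 ^ (m - 1)) ^ (2 * m) := by
    have e1 : (2 ^ m) ^ m = 2 ^ (m * m) := by rw [← pow_mul]
    have e2 : (2 ^ (m - 1)) ^ (2 * m) = 2 ^ ((m - 1) * (2 * m)) := by rw [← pow_mul]
    rw [e1, e2]
    have hmm : m * m + m * (m - 2) ≤ (m - 1) * (2 * m) := by
      obtain ⟨k, rfl⟩ : ∃ k, m = k + 3 := ⟨m - 3, by omega⟩
      have e : k + 3 - 2 = k + 1 := rfl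
      have e' : k + 3 - 1 = k + 2 := rfl
      rw [e, e']
      nlinarith
    calc m * 2 ^ (m * m) < 2 ^ m * 2 ^ (m * m) :=
          mul_lt_mul_of_pos_right (Nat.lt_two_pow_self) (by positivity)
      _ ≤ 2 ^ (m * (m - 2)) * 2 ^ (m * m) := by
          apply Nat.mul_le_mul_right
          apply Nat.pow_le_pow_right (by norm_num)
          have : 1 ≤ m - 2 := by omega
          calc m = m * 1 := (mul_one m).symm
            _ ≤ m * (m - 2) := Nat.mul_le_mul_left m this
      _ = 2 ^ (m * m + m * (m - 2)) := by rw [← pow_add, Nat.add_comm]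
      _ ≤ 2 ^ ((m - 1) * (2 * m)) := Nat.pow_le_pow_right (by norm_num) hmm
  have h3 : (2 ^ (m - 1)) ^ (2 * m) ≤ m.factorial ^ (2 * m) :=
    Nat.pow_le_pow_left (two_pow_le_fact m) _
  omega

theorem placements_gt_matrices (m : ℕ) (hm : 2 ≤ m) :
    (∑ i ∈ Finset.range m, ((m.choose i : ℤ) + (m.choose (i+1) : ℤ)) ^ m -
        ∑ i ∈ Finset.Ico 1 m, (m.choose i : ℤ) ^ m) <
      (Nat.factorial m : ℤ) ^ (2 * m) := by
  rcases eq_or_lt_of_le hm with h2 | h3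
  · subst h2
    norm_num [Finset.sum_range_succ, Finset.sum_Ico_eq_sum_range, Nat.factorial]
  · have hsub : (0 : ℤ) ≤ ∑ i ∈ Finset.Ico 1 m, (m.choose i : ℤ) ^ m := by
      apply Finset.sum_nonneg
      intro i _
      positivity
    have hmain : (∑ i ∈ Finset.range m, ((m.choose i : ℤ) + (m.choose (i+1) : ℤ)) ^ m)
        < (Nat.factorial m : ℤ) ^ (2 * m) := by
      have := nat_bound m h3
      have hcast : (∑ i ∈ Finset.range m, ((m.choose i : ℤ) + (m.choose (i+1) : ℤ)) ^ m)
          = ((∑ i ∈ Finset.range m, (m.choose i + m.choose (i+1)) ^ m : ℕ) : ℤ) := by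
        push_cast
        rfl
      rw [hcast]
      exact_mod_cast this
    omega
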